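/- arXiv:0706.2852 — 3 statements merged into one kernel-verified Lean document; each statement's English description precedes it below -/
import Mathlib

section
/- Let $T = (T_{\overline{j}i\overline{l}k})$ be a tensor on $\mathbb{C}^n$ (i.e., a complex-valued function of four indices in $\{1,\dots,n\}$) satisfying the symmetry $T_{\overline{j}i\overline{l}k} = T_{\overline{l}i\overline{j}k} = T_{\overline{j}k\overline{l}i}$. Suppose $T$ is Griffiths nonnegative and satisfies the strengthened condition $\sum_{i,j,k,l} (T_{\overline{j}i\overline{l}k} - c\,\delta_{ji}\delta_{lk}) \overline{V^j} V^i \overline{W^l} W^k \geq 0$ for all vectors $V, W \in \mathbb{C}^n$ and some constant $c > 0$. Let $S_{\overline{j}i} = \sum_k T_{\overline{j}i\overline{k}k}$. Then the tensor $T_{\overline{j}i\overline{l}k} + S_{\overline{j}i}\delta_{lk} - nc\,\delta_{ji}\delta_{lk}$ is Nakano nonnegative, i.e., $\sum_{i,j,k,l} (T_{\overline{j}i\overline{l}k} + S_{\overline{j}i}\delta_{lk} - nc\,\delta_{ji}\delta_{lk}) \overline{\zeta^{jl}} \zeta^{ik} \geq 0$ for every matrix $\zeta \in \mathbb{C}^{n\times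 n}$. -/
open Complex Finset ComplexOrder
set_option maxHeartbeats 2000000

noncomputable def om : ℂ := (-1 + Real.sqrt 3 * Complex.I)/2

lemma sqrt3_sq : (Real.sqrt 3 : ℂ) * (Real.sqrt 3 : ℂ) = 3 := by
  norm_cast
  exact Real.mul_self_sqrt (by norm_num)

lemma om_sq : om^2 = (-1 - Real.sqrt 3 * Complex.I)/2 := by
  unfold om
  have h : Complex.I^2 = -1 := Complex.I_sq
  linear_combination (Complex.I^2/4) * sqrt3_sq + (3/4) * h

lemma om_cube : om^3 = 1 := by
  have h : Complex.I^2 = -1 := Complex.I_sq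
  have h2 : om^3 = om^2 * om := by ring
  rw [h2, om_sq]; unfold om
  linear_combination (-(Complex.I^2)/4) * sqrt3_sq - (3/4) * h

lemma om_sum : 1 + om + om^2 = 0 := by
  rw [om_sq]; unfold om; ring

lemma om_conj : (starRingEnd ℂ) om = om^2 := by
  rw [om_sq]; unfold om
  rw [map_div₀, map_add, map_mul]
  simp [Complex.conj_I, map_ofNat]
  ring

noncomputable def chi (a : ZMod 3) : ℂ := om ^ a.val

lemma om_pow_mod (x : ℕ) : om ^ x = om ^ (x % 3) := by
  conv_lhs => rw [← Nat.mod_add_div x 3]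
  rw [pow_add, pow_mul, om_cube, one_pow, mul_one]

lemma chi_add (a b : ZMod 3) : chi (a + b) = chi a * chi b := by
  unfold chi
  rw [← pow_add, ZMod.val_add, ← om_pow_mod]

lemma chi_zero : chi 0 = 1 := by unfold chi; simp

lemma chi_ne_zero (a : ZMod 3) : chi a ≠ 0 := by
  intro h
  have : chi a * chi (-a) = 1 := by rw [← chi_add]; simp [chi_zero]
  rw [h, zero_mul] at this; exact zero_ne_one this

lemma chi_conj (a : ZMod 3) : (starRingEnd ℂ) (chi a) = chi (-a) := by
  have h1 : chi a * chi (-a) = 1 := by rw [← chi_add]; simp [chi_zero]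
  have h2 : chi a * (starRingEnd ℂ) (chi a) = 1 := by
    unfold chi
    rw [map_pow, om_conj, ← pow_mul, ← pow_add,
      show a.val + 2 * a.val = 3 * a.val by ring, pow_mul, om_cube, one_pow]
  exact mul_left_cancel₀ (chi_ne_zero a) (h2.trans h1.symm)

lemma chi_one : chi 1 = om := by
  unfold chi; norm_num [show ((1:ZMod 3)).val = 1 by decide]

lemma chi_two : chi 2 = om^2 := by
  unfold chi; norm_num [show ((2:ZMod 3)).val = 2 by decide]

lemma chi_sum (t : ZMod 3) : ∑ b : ZMod 3, chi (t * b) = if t = 0 then 3 else 0 := by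
  have huniv : (univ : Finset (ZMod 3)) = {0, 1, 2} := by decide
  rw [huniv, Finset.sum_insert (by decide), Finset.sum_insert (by decide),
    Finset.sum_singleton]
  have ht : t = 0 ∨ t = 1 ∨ t = 2 := by revert t; decide
  rcases ht with h|h|h <;> subst h
  · rw [show (0:ZMod 3) * 0 = 0 by decide, show (0:ZMod 3) * 1 = 0 by decide,
      show (0:ZMod 3) * 2 = 0 by decide, chi_zero, if_pos rfl]; norm_num
  · rw [show (1:ZMod 3) * 0 = 0 by decide, show (1:ZMod 3) * 1 = 1 by decide,
      show (1:ZMod 3) * 2 = 2 by decide, chi_zero, chi_one, chi_two,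
      if_neg (by decide : (1:ZMod 3) ≠ 0)]
    linear_combination om_sum
  · rw [show (2:ZMod 3) * 0 = 0 by decide, show (2:ZMod 3) * 1 = 2 by decide,
      show (2:ZMod 3) * 2 = 1 by decide, chi_zero, chi_one, chi_two,
      if_neg (by decide : (2:ZMod 3) ≠ 0)]
    linear_combination om_sum

lemma key {n : ℕ} (m k p l : Fin n) :
    (∀ q : Fin n, (if q = m then (1:ZMod 3) else 0) + (if q = k then 1 else 0)
      = (if q = p then 1 else 0) + (if q = l then 1 else 0)) ↔
    ((m = p ∧ k = l) ∨ (m = l ∧ k = p)) := by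
  constructor
  · intro h
    by_cases hmp : m = p
    · subst hmp
      refine Or.inl ⟨rfl, ?_⟩
      by_contra hkl
      have hk := h k
      rw [if_pos (rfl : k = k), if_neg hkl] at hk
      have := add_left_cancel hk
      exact absurd this (by decide)
    · have hm := h m
      rw [if_pos (rfl : m = m), if_neg hmp] at hm
      by_cases hml : m = l
      · by_cases hmk : m = k
        · rw [if_pos hmk, if_pos hml] at hm
          exact absurd hm (by decide)
        · rw [if_neg hmk, if_pos hml] at hm
          -- fine, consistent: 1+0 = 0+1
          have hp := h p
          rw [if_pos (rfl : p = p), if_neg (fun hh => hmp hh.symm)] at hp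
          by_cases hpl : p = l
          · exact absurd (hml.trans hpl.symm) hmp
          · rw [if_neg hpl] at hp
            by_cases hpk : p = k
            · exact Or.inr ⟨hml, hpk.symm⟩
            · rw [if_neg hpk] at hp
              exact absurd hp (by decide)
      · by_cases hmk : m = k
        · rw [if_pos hmk, if_neg hml] at hm
          exact absurd hm (by decide)
        · rw [if_neg hmk, if_neg hml] at hm
          exact absurd hm (by decide)
  · rintro (⟨h1, h2⟩ | ⟨h1, h2⟩) q <;> subst h1 <;> subst h2 <;> ring

lemma chi_map_sum {α : Type*} (s : Finset α) (f : α → ZMod 3) :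
    chi (∑ x ∈ s, f x) = ∏ x ∈ s, chi (f x) := by
  induction s using Finset.cons_induction with
  | empty => simp [chi_zero]
  | cons a s ha ih => rw [Finset.sum_cons, Finset.prod_cons, chi_add, ih]

lemma Fval {n : ℕ} (m k p l : Fin n) :
    ∑ a : Fin n → ZMod 3, chi (a m) * chi (-(a p)) * chi (-(a l)) * chi (a k)
    = if ((m = p ∧ k = l) ∨ (m = l ∧ k = p)) then (3:ℂ)^n else 0 := by
  classical
  set s : Fin n → ZMod 3 := fun q =>
    ((if q = m then 1 else 0) + (if q = k then 1 else 0))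
    - ((if q = p then 1 else 0) + (if q = l then 1 else 0)) with hs
  have hterm : ∀ a : Fin n → ZMod 3,
      chi (a m) * chi (-(a p)) * chi (-(a l)) * chi (a k)
      = ∏ q, chi (s q * a q) := by
    intro a
    have h1 : ∀ r : Fin n, a r = ∑ q, (if q = r then (1:ZMod 3) else 0) * a q := by
      intro r
      have : ∀ q : Fin n, (if q = r then (1:ZMod 3) else 0) * a q
          = (if q = r then a q else 0) := by
        intro q; split_ifs with h <;> simp [h]
      rw [Finset.sum_congr rfl (fun q _ => this q),
        Finset.sum_ite_eq' univ r a, if_pos (mem_univ r)]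
    have h2 : a m + (-(a p)) + (-(a l)) + a k = ∑ q, s q * a q := by
      rw [hs]
      conv_lhs => rw [h1 m, h1 p, h1 l, h1 k]
      rw [← Finset.sum_neg_distrib, ← Finset.sum_neg_distrib,
        ← Finset.sum_add_distrib, ← Finset.sum_add_distrib, ← Finset.sum_add_distrib]
      exact Finset.sum_congr rfl (fun q _ => by ring)
    rw [← chi_map_sum, ← h2, chi_add, chi_add, chi_add]
  rw [Finset.sum_congr rfl (fun a _ => hterm a)]
  have hcond : (∀ q, s q = 0) ↔ ((m = p ∧ k = l) ∨ (m = l ∧ k = p)) := by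
    simp only [hs, sub_eq_zero]
    exact key m k p l
  calc ∑ a : Fin n → ZMod 3, ∏ q, chi (s q * a q)
      = ∑ a ∈ Fintype.piFinset (fun _ : Fin n => (univ : Finset (ZMod 3))),
        ∏ q, chi (s q * a q) := by rw [Fintype.piFinset_univ]
    _ = ∏ q, ∑ b : ZMod 3, chi (s q * b) :=
        (Finset.prod_univ_sum (fun _ => (univ : Finset (ZMod 3))) (fun q b => chi (s q * b))).symm
    _ = ∏ q, (if s q = 0 then (3:ℂ) else 0) := Finset.prod_congr rfl (fun q _ => chi_sum (s q))
    _ = if (∀ q, s q = 0) then (3:ℂ)^n else 0 := by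
        by_cases hall : ∀ q, s q = 0
        · rw [if_pos hall, Finset.prod_congr rfl (fun q _ => if_pos (hall q)),
            Finset.prod_const, card_univ, Fintype.card_fin]
        · rw [if_neg hall]
          push_neg at hall
          obtain ⟨q, hq⟩ := hall
          exact Finset.prod_eq_zero (mem_univ q) (if_neg hq)
    _ = if ((m = p ∧ k = l) ∨ (m = l ∧ k = p)) then (3:ℂ)^n else 0 := by
        rw [if_congr hcond rfl rfl]

lemma pick {n : ℕ} (b : Fin n) (g : Fin n → ℂ) :
    ∑ x, (if x = b then g x else 0) = g b := by
  rw [Finset.sum_ite_eq' univ b g, if_pos (Finset.mem_univ b)]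

lemma sum_swap5 {α : Type*} [Fintype α] {n : ℕ}
    (f : α → Fin n → Fin n → Fin n → Fin n → ℂ) :
    ∑ a : α, ∑ i, ∑ j, ∑ k, ∑ l, f a i j k l
      = ∑ i, ∑ j, ∑ k, ∑ l, ∑ a : α, f a i j k l := by
  rw [Finset.sum_comm]
  refine Finset.sum_congr rfl fun i _ => ?_
  rw [Finset.sum_comm]
  refine Finset.sum_congr rfl fun j _ => ?_
  rw [Finset.sum_comm]
  refine Finset.sum_congr rfl fun k _ => ?_
  rw [Finset.sum_comm]

lemma hP_lemma {n : ℕ} (m p k l : Fin n) (X : ℂ) :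
    X * (if ((m = p ∧ k = l) ∨ (m = l ∧ k = p)) then (3:ℂ)^n else 0)
    = (if p = m then (3:ℂ)^n * (if l = k then 1 else 0) * X else 0)
      + (if p = k then (3:ℂ)^n * (if m = l then 1 else 0) * X else 0)
      - (if p = k then (3:ℂ)^n * (if l = k then 1 else 0) * (if m = k then 1 else 0) * X
          else 0) := by
  by_cases h1 : m = p <;> by_cases h2 : k = l <;> by_cases h3 : m = l <;>
    by_cases h4 : k = p <;> by_cases h5 : m = k <;> simp_all <;> (try ring) <;>
    intros <;> (try split_ifs) <;> simp_all

lemma hQ_pt {n : ℕ} (l k : Fin n) (A R z cJ : ℂ) (f : Fin n → ℂ) :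
    (A - cJ * (if l = k then 1 else 0)) *
      ((3:ℂ)^n * ((if l = k then 1 else 0) * R + f l * z
        - (if l = k then 1 else 0) * (f k * z)))
    = (3:ℂ)^n * ((if l = k then A * R else 0) + A * (f l * z)
        - (if l = k then A * (f k * z) else 0) - (if l = k then cJ * R else 0)) := by
  by_cases h : l = k <;> simp [h] <;> ring

/-- Lemma 5 of the paper (Demailly's argument), pointwise linear-algebra form:
if `T` has the Kähler curvature symmetries, is Griffiths nonnegative, and
satisfies the strengthened Griffiths bound with constant `c > 0`, then
`T_{j̄il̄k} + S_{j̄i} δ_{lk} - nc δ_{ji} δ_{lk}` is Nakano nonnegative, where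
`S_{j̄i} = ∑_k T_{j̄ik̄k}`.  Indices of `T j i l k` are in the order `j̄ i l̄ k`. -/
theorem stmt3 (n : ℕ) (T : Fin n → Fin n → Fin n → Fin n → ℂ) (c : ℝ) (hc : 0 < c)
    (hsym1 : ∀ i j k l, T j i l k = T l i j k)
    (hsym2 : ∀ i j k l, T j i l k = T j k l i)
    (hGr : ∀ V W : Fin n → ℂ, 0 ≤ ∑ i, ∑ j, ∑ k, ∑ l,
      T j i l k * (starRingEnd ℂ) (V j) * V i * (starRingEnd ℂ) (W l) * W k)
    (hGr' : ∀ V W : Fin n → ℂ, 0 ≤ ∑ i, ∑ j, ∑ k, ∑ l,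
      (T j i l k - (c : ℂ) * (if j = i then 1 else 0) * (if l = k then 1 else 0)) *
        (starRingEnd ℂ) (V j) * V i * (starRingEnd ℂ) (W l) * W k) :
    ∀ ζ : Fin n → Fin n → ℂ, 0 ≤ ∑ i, ∑ j, ∑ k, ∑ l,
      (T j i l k + (∑ m, T j i m m) * (if l = k then 1 else 0)
          - (n : ℂ) * (c : ℂ) * (if j = i then 1 else 0) * (if l = k then 1 else 0)) *
        (starRingEnd ℂ) (ζ j l) * ζ i k := by
  intro ζ
  classical
  set V : (Fin n → ZMod 3) → Fin n → ℂ := fun a j => ∑ m, chi (-(a m)) * ζ j m with hV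
  set W : (Fin n → ZMod 3) → Fin n → ℂ := fun a k => chi (a k) with hW
  -- abbreviations
  set N : ℂ := ∑ i, ∑ j, ∑ k, ∑ l, T j i l k * ((starRingEnd ℂ) (ζ j l) * ζ i k) with hN
  set St : ℂ := ∑ i, ∑ j, ∑ k, (∑ m, T j i m m) * ((starRingEnd ℂ) (ζ j k) * ζ i k) with hSt
  set Z : ℂ := ∑ i, ∑ k, (starRingEnd ℂ) (ζ i k) * ζ i k with hZ
  set Dg : ℂ := ∑ i, ∑ j, ∑ q, T j i q q * ((starRingEnd ℂ) (ζ j q) * ζ i q) with hDg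
  -- the inner Fourier evaluation
  have inner : ∀ i j k l : Fin n,
      (∑ a : Fin n → ZMod 3, (starRingEnd ℂ) (V a j) * V a i *
        (starRingEnd ℂ) (W a l) * W a k)
      = (3:ℂ)^n * ((if l = k then 1 else 0) * (∑ m, (starRingEnd ℂ) (ζ j m) * ζ i m)
          + (starRingEnd ℂ) (ζ j l) * ζ i k
          - (if l = k then 1 else 0) * ((starRingEnd ℂ) (ζ j k) * ζ i k)) := by
    intro i j k l
    have hconjV : ∀ a : Fin n → ZMod 3,
        (starRingEnd ℂ) (V a j) = ∑ m, chi (a m) * (starRingEnd ℂ) (ζ j m) := by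
      intro a
      rw [hV]
      simp only
      rw [map_sum]
      exact Finset.sum_congr rfl fun m _ => by rw [map_mul, chi_conj, neg_neg]
    have step1 : ∀ a : Fin n → ZMod 3,
        (starRingEnd ℂ) (V a j) * V a i * (starRingEnd ℂ) (W a l) * W a k
        = ∑ m, ∑ p, ((starRingEnd ℂ) (ζ j m) * ζ i p) *
            (chi (a m) * chi (-(a p)) * chi (-(a l)) * chi (a k)) := by
      intro a
      rw [hconjV a]
      rw [show V a i = ∑ p, chi (-(a p)) * ζ i p from by rw [hV]]
      rw [show W a l = chi (a l) from by rw [hW]]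
      rw [show W a k = chi (a k) from by rw [hW]]
      rw [chi_conj]
      simp only [Finset.sum_mul, Finset.mul_sum]
      rw [Finset.sum_comm]
      exact Finset.sum_congr rfl fun m _ => Finset.sum_congr rfl fun p _ => by ring
    rw [Finset.sum_congr rfl fun a (_ : a ∈ univ) => step1 a]
    rw [Finset.sum_comm]
    rw [Finset.sum_congr rfl fun m (_ : m ∈ univ) => Finset.sum_comm]
    have step2 : ∀ m p : Fin n,
        (∑ a : Fin n → ZMod 3, ((starRingEnd ℂ) (ζ j m) * ζ i p) *
          (chi (a m) * chi (-(a p)) * chi (-(a l)) * chi (a k)))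
        = ((starRingEnd ℂ) (ζ j m) * ζ i p) *
            (if ((m = p ∧ k = l) ∨ (m = l ∧ k = p)) then (3:ℂ)^n else 0) := by
      intro m p
      rw [← Finset.mul_sum, Fval m k p l]
    rw [Finset.sum_congr rfl fun m (_ : m ∈ univ) =>
      Finset.sum_congr rfl fun p (_ : p ∈ univ) => step2 m p]
    have hP : ∀ m p : Fin n,
        ((starRingEnd ℂ) (ζ j m) * ζ i p) *
          (if ((m = p ∧ k = l) ∨ (m = l ∧ k = p)) then (3:ℂ)^n else 0)
        = (if p = m then (3:ℂ)^n * (if l = k then 1 else 0) *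
              ((starRingEnd ℂ) (ζ j m) * ζ i p) else 0)
          + (if p = k then (3:ℂ)^n * (if m = l then 1 else 0) *
              ((starRingEnd ℂ) (ζ j m) * ζ i p) else 0)
          - (if p = k then (3:ℂ)^n * (if l = k then 1 else 0) * (if m = k then 1 else 0) *
              ((starRingEnd ℂ) (ζ j m) * ζ i p) else 0) :=
      fun m p => hP_lemma m p k l _
    rw [Finset.sum_congr rfl fun m (_ : m ∈ univ) =>
      Finset.sum_congr rfl fun p (_ : p ∈ univ) => hP m p]
    simp only [Finset.sum_add_distrib, Finset.sum_sub_distrib]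
    have e1 : ∀ m : Fin n, (∑ p, if p = m then (3:ℂ)^n * (if l = k then 1 else 0) *
        ((starRingEnd ℂ) (ζ j m) * ζ i p) else 0)
        = (3:ℂ)^n * (if l = k then 1 else 0) * ((starRingEnd ℂ) (ζ j m) * ζ i m) :=
      fun m => pick m _
    have e2 : ∀ m : Fin n, (∑ p, if p = k then (3:ℂ)^n * (if m = l then 1 else 0) *
        ((starRingEnd ℂ) (ζ j m) * ζ i p) else 0)
        = (3:ℂ)^n * (if m = l then 1 else 0) * ((starRingEnd ℂ) (ζ j m) * ζ i k) :=
      fun m => pick k _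
    have e3 : ∀ m : Fin n, (∑ p, if p = k then (3:ℂ)^n * (if l = k then 1 else 0) *
        (if m = k then 1 else 0) * ((starRingEnd ℂ) (ζ j m) * ζ i p) else 0)
        = (3:ℂ)^n * (if l = k then 1 else 0) * (if m = k then 1 else 0) *
            ((starRingEnd ℂ) (ζ j m) * ζ i k) :=
      fun m => pick k _
    rw [Finset.sum_congr rfl fun m (_ : m ∈ univ) => e1 m,
      Finset.sum_congr rfl fun m (_ : m ∈ univ) => e2 m,
      Finset.sum_congr rfl fun m (_ : m ∈ univ) => e3 m]
    have f2 : (∑ m, (3:ℂ)^n * (if m = l then 1 else 0) *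
        ((starRingEnd ℂ) (ζ j m) * ζ i k))
        = (3:ℂ)^n * ((starRingEnd ℂ) (ζ j l) * ζ i k) := by
      have e : ∀ m : Fin n, (3:ℂ)^n * (if m = l then 1 else 0) *
          ((starRingEnd ℂ) (ζ j m) * ζ i k)
          = (if m = l then (3:ℂ)^n * ((starRingEnd ℂ) (ζ j m) * ζ i k) else 0) := by
        intro m; by_cases h : m = l <;> simp [h]
      rw [Finset.sum_congr rfl fun m _ => e m, pick]
    have f3 : (∑ m, (3:ℂ)^n * (if l = k then 1 else 0) * (if m = k then 1 else 0) *
        ((starRingEnd ℂ) (ζ j m) * ζ i k))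
        = (3:ℂ)^n * (if l = k then 1 else 0) * ((starRingEnd ℂ) (ζ j k) * ζ i k) := by
      have e : ∀ m : Fin n, (3:ℂ)^n * (if l = k then 1 else 0) * (if m = k then 1 else 0) *
          ((starRingEnd ℂ) (ζ j m) * ζ i k)
          = (if m = k then (3:ℂ)^n * (if l = k then 1 else 0) *
              ((starRingEnd ℂ) (ζ j m) * ζ i k) else 0) := by
        intro m; by_cases h : m = k <;> simp [h] <;> ring
      rw [Finset.sum_congr rfl fun m _ => e m, pick]
    rw [f2, f3, ← Finset.mul_sum]
    ring
  -- sum of the Griffiths' instances over a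
  have hQ : ∑ a : Fin n → ZMod 3, (∑ i, ∑ j, ∑ k, ∑ l,
      (T j i l k - (c : ℂ) * (if j = i then 1 else 0) * (if l = k then 1 else 0)) *
        (starRingEnd ℂ) (V a j) * V a i * (starRingEnd ℂ) (W a l) * W a k)
      = (3:ℂ)^n * (N + St - Dg - (n : ℂ) * (c:ℂ) * Z) := by
    rw [sum_swap5 (fun a i j k l =>
      (T j i l k - (c : ℂ) * (if j = i then 1 else 0) * (if l = k then 1 else 0)) *
        (starRingEnd ℂ) (V a j) * V a i * (starRingEnd ℂ) (W a l) * W a k)]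
    have g1 : ∀ i j k l : Fin n, (∑ a : Fin n → ZMod 3,
        (T j i l k - (c:ℂ) * (if j = i then 1 else 0) * (if l = k then 1 else 0)) *
          (starRingEnd ℂ) (V a j) * V a i * (starRingEnd ℂ) (W a l) * W a k)
        = (3:ℂ)^n * ((if l = k then T j i l k * (∑ m, (starRingEnd ℂ) (ζ j m) * ζ i m) else 0)
            + T j i l k * ((starRingEnd ℂ) (ζ j l) * ζ i k)
            - (if l = k then T j i l k * ((starRingEnd ℂ) (ζ j k) * ζ i k) else 0)
            - (if l = k then ((c:ℂ) * (if j = i then 1 else 0)) *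
                (∑ m, (starRingEnd ℂ) (ζ j m) * ζ i m) else 0)) := by
      intro i j k l
      have c1 : (∑ a : Fin n → ZMod 3,
          (T j i l k - (c:ℂ) * (if j = i then 1 else 0) * (if l = k then 1 else 0)) *
            (starRingEnd ℂ) (V a j) * V a i * (starRingEnd ℂ) (W a l) * W a k)
          = (T j i l k - (c:ℂ) * (if j = i then 1 else 0) * (if l = k then 1 else 0)) *
            ∑ a : Fin n → ZMod 3,
              (starRingEnd ℂ) (V a j) * V a i * (starRingEnd ℂ) (W a l) * W a k := by
        rw [Finset.mul_sum]
        exact Finset.sum_congr rfl fun a _ => by ring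
      rw [c1, inner i j k l]
      exact hQ_pt l k (T j i l k) (∑ m, (starRingEnd ℂ) (ζ j m) * ζ i m) (ζ i k)
        ((c:ℂ) * (if j = i then 1 else 0)) (fun l => (starRingEnd ℂ) (ζ j l))
    rw [Finset.sum_congr rfl fun i (_ : i ∈ univ) => Finset.sum_congr rfl
      fun j (_ : j ∈ univ) => Finset.sum_congr rfl fun k (_ : k ∈ univ) =>
      Finset.sum_congr rfl fun l (_ : l ∈ univ) => g1 i j k l]
    simp only [← Finset.mul_sum]
    refine congrArg (HMul.hMul ((3:ℂ)^n)) ?_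
    simp only [Finset.sum_add_distrib, Finset.sum_sub_distrib]
    have hB1 : (∑ i : Fin n, ∑ j : Fin n, ∑ k : Fin n, ∑ l : Fin n, if l = k then
        T j i l k * (∑ m, (starRingEnd ℂ) (ζ j m) * ζ i m) else 0) = St := by
      rw [hSt]
      refine Finset.sum_congr rfl fun i _ => Finset.sum_congr rfl fun j _ => ?_
      calc (∑ k, ∑ l, if l = k then
              T j i l k * (∑ m, (starRingEnd ℂ) (ζ j m) * ζ i m) else 0)
          = ∑ k, T j i k k * (∑ m, (starRingEnd ℂ) (ζ j m) * ζ i m) :=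
            Finset.sum_congr rfl fun k _ => pick k _
        _ = (∑ k, T j i k k) * (∑ m, (starRingEnd ℂ) (ζ j m) * ζ i m) :=
            (Finset.sum_mul _ _ _).symm
        _ = ∑ k, (∑ m, T j i m m) * ((starRingEnd ℂ) (ζ j k) * ζ i k) :=
            Finset.mul_sum _ _ _
    have hB3 : (∑ i : Fin n, ∑ j : Fin n, ∑ k : Fin n, ∑ l : Fin n, if l = k then
        T j i l k * ((starRingEnd ℂ) (ζ j k) * ζ i k) else 0) = Dg := by
      rw [hDg]
      refine Finset.sum_congr rfl fun i _ => Finset.sum_congr rfl fun j _ =>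
        Finset.sum_congr rfl fun k _ => ?_
      exact pick k _
    have hB4 : (∑ i : Fin n, ∑ j : Fin n, ∑ k : Fin n, ∑ l : Fin n, if l = k then
        ((c:ℂ) * (if j = i then 1 else 0)) * (∑ m, (starRingEnd ℂ) (ζ j m) * ζ i m) else 0)
        = (n : ℂ) * (c:ℂ) * Z := by
      rw [hZ]
      have p1 : ∀ i j : Fin n, (∑ k : Fin n, ∑ l, if l = k then
          ((c:ℂ) * (if j = i then 1 else 0)) * (∑ m, (starRingEnd ℂ) (ζ j m) * ζ i m) else 0)
          = (if j = i then (n:ℂ) * ((c:ℂ) * (∑ m, (starRingEnd ℂ) (ζ j m) * ζ i m))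
              else 0) := by
        intro i j
        have e : ∀ k : Fin n, (∑ l, if l = k then
            ((c:ℂ) * (if j = i then 1 else 0)) * (∑ m, (starRingEnd ℂ) (ζ j m) * ζ i m) else 0)
            = ((c:ℂ) * (if j = i then 1 else 0)) *
                (∑ m, (starRingEnd ℂ) (ζ j m) * ζ i m) := fun k => pick k _
        rw [Finset.sum_congr rfl fun k _ => e k, Finset.sum_const, card_univ,
          Fintype.card_fin, nsmul_eq_mul]
        by_cases h : j = i <;> simp [h] <;> ring
      have p2 : ∀ i : Fin n, (∑ j, ∑ k : Fin n, ∑ l, if l = k then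
          ((c:ℂ) * (if j = i then 1 else 0)) * (∑ m, (starRingEnd ℂ) (ζ j m) * ζ i m) else 0)
          = (n:ℂ) * ((c:ℂ) * (∑ m, (starRingEnd ℂ) (ζ i m) * ζ i m)) := by
        intro i
        rw [Finset.sum_congr rfl fun j (_ : j ∈ univ) => p1 i j]
        exact pick i _
      rw [Finset.sum_congr rfl fun i (_ : i ∈ univ) => p2 i]
      simp only [← Finset.mul_sum]
      ring
    rw [hB1, hB3, hB4, hN]
    ring
  have hE : ∑ q : Fin n, (∑ i, ∑ j, ∑ k, ∑ l,
      T j i l k * (starRingEnd ℂ) (ζ j q) * ζ i q *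
        (starRingEnd ℂ) (if l = q then (1:ℂ) else 0) * (if k = q then (1:ℂ) else 0))
      = Dg := by
    rw [hDg, Finset.sum_comm]
    refine Finset.sum_congr rfl fun i _ => ?_
    rw [Finset.sum_comm]
    refine Finset.sum_congr rfl fun j _ => ?_
    refine Finset.sum_congr rfl fun q _ => ?_
    have hl : ∀ k : Fin n, (∑ l, T j i l k * (starRingEnd ℂ) (ζ j q) * ζ i q *
        (starRingEnd ℂ) (if l = q then (1:ℂ) else 0) * (if k = q then (1:ℂ) else 0))
        = (if k = q then T j i q k * (starRingEnd ℂ) (ζ j q) * ζ i q else 0) := by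
      intro k
      have e : ∀ l : Fin n, T j i l k * (starRingEnd ℂ) (ζ j q) * ζ i q *
          (starRingEnd ℂ) (if l = q then (1:ℂ) else 0) * (if k = q then (1:ℂ) else 0)
          = (if l = q then (if k = q then T j i l k * (starRingEnd ℂ) (ζ j q) * ζ i q else 0)
              else 0) := by
        intro l
        by_cases h : l = q <;> by_cases h' : k = q <;> simp [h, h']
      rw [Finset.sum_congr rfl fun l _ => e l, pick]
    rw [Finset.sum_congr rfl fun k _ => hl k, pick]
    ring
  have hGoal : (∑ i, ∑ j, ∑ k, ∑ l,
      (T j i l k + (∑ m, T j i m m) * (if l = k then 1 else 0)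
          - (n : ℂ) * (c : ℂ) * (if j = i then 1 else 0) * (if l = k then 1 else 0)) *
        (starRingEnd ℂ) (ζ j l) * ζ i k) = N + St - (n : ℂ) * (c:ℂ) * Z := by
    have h1 : ∀ i j k : Fin n, (∑ l, (T j i l k + (∑ m, T j i m m) * (if l = k then 1 else 0)
          - (n : ℂ) * (c : ℂ) * (if j = i then 1 else 0) * (if l = k then 1 else 0)) *
        (starRingEnd ℂ) (ζ j l) * ζ i k)
        = (∑ l, T j i l k * ((starRingEnd ℂ) (ζ j l) * ζ i k))
          + (∑ m, T j i m m) * ((starRingEnd ℂ) (ζ j k) * ζ i k)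
          - (n : ℂ) * (c : ℂ) * (if j = i then 1 else 0) * ((starRingEnd ℂ) (ζ j k) * ζ i k) := by
      intro i j k
      have e : ∀ l : Fin n, (T j i l k + (∑ m, T j i m m) * (if l = k then 1 else 0)
          - (n : ℂ) * (c : ℂ) * (if j = i then 1 else 0) * (if l = k then 1 else 0)) *
          (starRingEnd ℂ) (ζ j l) * ζ i k
          = T j i l k * ((starRingEnd ℂ) (ζ j l) * ζ i k)
            + (if l = k then (∑ m, T j i m m) * ((starRingEnd ℂ) (ζ j l) * ζ i k) else 0)
            - (if l = k then (n : ℂ) * (c : ℂ) * (if j = i then 1 else 0) *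
                ((starRingEnd ℂ) (ζ j l) * ζ i k) else 0) := by
        intro l
        by_cases h : l = k <;> by_cases h' : j = i <;> simp [h, h'] <;> ring
      rw [Finset.sum_congr rfl fun l _ => e l, Finset.sum_sub_distrib,
        Finset.sum_add_distrib, pick, pick]
    rw [Finset.sum_congr rfl fun i _ => Finset.sum_congr rfl fun j _ =>
      Finset.sum_congr rfl fun k _ => h1 i j k]
    simp only [Finset.sum_add_distrib, Finset.sum_sub_distrib]
    rw [hN, hSt, hZ]
    congr 1
    -- last term: ∑ i ∑ j ∑ k  nc * ite(j=i) * (...) = nc * Z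
    have h2 : ∀ i : Fin n, (∑ j, ∑ k, (n : ℂ) * (c : ℂ) * (if j = i then 1 else 0) *
        ((starRingEnd ℂ) (ζ j k) * ζ i k))
        = ∑ k, (n : ℂ) * (c : ℂ) * ((starRingEnd ℂ) (ζ i k) * ζ i k) := by
      intro i
      have e : ∀ j : Fin n, (∑ k, (n : ℂ) * (c : ℂ) * (if j = i then 1 else 0) *
          ((starRingEnd ℂ) (ζ j k) * ζ i k))
          = (if j = i then ∑ k, (n : ℂ) * (c : ℂ) * ((starRingEnd ℂ) (ζ j k) * ζ i k)
              else 0) := by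
        intro j
        by_cases h : j = i <;> simp [h]
      rw [Finset.sum_congr rfl fun j _ => e j, pick]
    rw [Finset.sum_congr rfl fun i _ => h2 i]
    simp only [← Finset.mul_sum]
  -- positivity
  have h3 : (0:ℂ) ≤ (3:ℂ)^n := by
    have h : (((3:ℝ)^n : ℝ) : ℂ) = (3:ℂ)^n := by push_cast; ring
    rw [← h, Complex.zero_le_real]
    positivity
  have hpos1 : (0:ℂ) ≤ ∑ a : Fin n → ZMod 3, (∑ i, ∑ j, ∑ k, ∑ l,
      (T j i l k - (c : ℂ) * (if j = i then 1 else 0) * (if l = k then 1 else 0)) *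
        (starRingEnd ℂ) (V a j) * V a i * (starRingEnd ℂ) (W a l) * W a k) :=
    Finset.sum_nonneg fun a _ => hGr' (V a) (W a)
  have hpos2 : (0:ℂ) ≤ ∑ q : Fin n, (∑ i, ∑ j, ∑ k, ∑ l,
      T j i l k * (starRingEnd ℂ) (ζ j q) * ζ i q *
        (starRingEnd ℂ) (if l = q then (1:ℂ) else 0) * (if k = q then (1:ℂ) else 0)) :=
    Finset.sum_nonneg fun q _ => hGr (fun j => ζ j q) (fun k => if k = q then 1 else 0)
  have htot : (0:ℂ) ≤ (3:ℂ)^n * (∑ i, ∑ j, ∑ k, ∑ l,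
      (T j i l k + (∑ m, T j i m m) * (if l = k then 1 else 0)
          - (n : ℂ) * (c : ℂ) * (if j = i then 1 else 0) * (if l = k then 1 else 0)) *
        (starRingEnd ℂ) (ζ j l) * ζ i k) := by
    rw [hGoal]
    have : (3:ℂ)^n * (N + St - (n : ℂ) * (c:ℂ) * Z)
        = (3:ℂ)^n * (N + St - Dg - (n : ℂ) * (c:ℂ) * Z) + (3:ℂ)^n * Dg := by ring
    rw [this, ← hQ, ← hE]
    exact add_nonneg hpos1 (mul_nonneg h3 hpos2)
  have h3ne : ((3:ℂ)^n) ≠ 0 := by positivity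
  have h3inv : (0:ℂ) ≤ ((3:ℂ)^n)⁻¹ := by
    have h : (((((3:ℝ)^n)⁻¹ : ℝ)) : ℂ) = ((3:ℂ)^n)⁻¹ := by push_cast; ring
    rw [← h, Complex.zero_le_real]
    positivity
  have := mul_nonneg h3inv htot
  rwa [← mul_assoc, inv_mul_cancel₀ h3ne, one_mul] at this
end

section
/- Let $n = 2$ and let $T = (T_{\overline{j}i\overline{l}k})$ be a tensor on $\mathbb{C}^2$ with the Kähler curvature symmetries $T_{\overline{j}i\overline{l}k} = T_{\overline{l}i\overline{j}k} = T_{\overline{j}k\overline{l}i}$ and the Hermitian symmetry $\overline{T_{\overline{j}i\overline{l}k}} = T_{\overline{i}j\overline{k}l}$. Then $T$ is Griffiths nonnegative if and only if $T$ is Nakano nonnegative. -/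
open Complex Finset ComplexOrder

private noncomputable def Qn (T : Fin 2 → Fin 2 → Fin 2 → Fin 2 → ℂ) (ζ : Fin 2 → Fin 2 → ℂ) : ℂ :=
  ∑ i, ∑ j, ∑ k, ∑ l, T j i l k * (starRingEnd ℂ) (ζ j l) * ζ i k

private lemma Qn_sym (T : Fin 2 → Fin 2 → Fin 2 → Fin 2 → ℂ)
    (hsym1 : ∀ i j k l, T j i l k = T l i j k)
    (hsym2 : ∀ i j k l, T j i l k = T j k l i)
    (ζ : Fin 2 → Fin 2 → ℂ) :
    Qn T ζ = Qn T (fun i k => (ζ i k + ζ k i) / 2) := by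
  have h2 : ∀ j l, T j 1 l 0 = T j 0 l 1 := fun j l => hsym2 1 j 0 l
  have h1 : ∀ i k, T 1 i 0 k = T 0 i 1 k := fun i k => hsym1 i 1 k 0
  simp only [Qn, Fin.sum_univ_two, map_add, map_div₀, map_ofNat, h1, h2]
  ring

private lemma Qn_rank_one (T : Fin 2 → Fin 2 → Fin 2 → Fin 2 → ℂ) (V W : Fin 2 → ℂ) :
    Qn T (fun i k => V i * W k) =
      ∑ i, ∑ j, ∑ k, ∑ l,
        T j i l k * (starRingEnd ℂ) (V j) * V i * (starRingEnd ℂ) (W l) * W k := by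
  simp only [Qn, Fin.sum_univ_two, map_mul]
  ring

/-- Lemma 7 of the paper, linear-algebra form: in complex dimension `2`, a tensor
with the Kähler curvature symmetries and Hermitian symmetry is Griffiths
nonnegative if and only if it is Nakano nonnegative.  Indices of `T j i l k` are
in the order `j̄ i l̄ k`. -/
theorem stmt4 (T : Fin 2 → Fin 2 → Fin 2 → Fin 2 → ℂ)
    (hsym1 : ∀ i j k l, T j i l k = T l i j k)
    (hsym2 : ∀ i j k l, T j i l k = T j k l i)
    (hherm : ∀ i j k l, (starRingEnd ℂ) (T j i l k) = T i j k l) :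
    (∀ V W : Fin 2 → ℂ, 0 ≤ ∑ i, ∑ j, ∑ k, ∑ l,
        T j i l k * (starRingEnd ℂ) (V j) * V i * (starRingEnd ℂ) (W l) * W k) ↔
    (∀ ζ : Fin 2 → Fin 2 → ℂ, 0 ≤ ∑ i, ∑ j, ∑ k, ∑ l,
        T j i l k * (starRingEnd ℂ) (ζ j l) * ζ i k) := by
  constructor
  · intro hG ζ
    -- find V W with symmetrization of V⊗W equal to symmetrization of ζ
    obtain ⟨V, W, hVW⟩ : ∃ V W : Fin 2 → ℂ,
        (fun i k => (ζ i k + ζ k i) / 2) =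
          (fun i k => (V i * W k + V k * W i) / 2) := by
      by_cases h0 : ζ 0 0 = 0
      · refine ⟨![ζ 0 1 + ζ 1 0, ζ 1 1], ![0, 1], ?_⟩
        funext i k
        fin_cases i <;> fin_cases k <;> simp [h0] <;> ring
      · set s : ℂ := (ζ 0 1 + ζ 1 0) / 2 with hs
        obtain ⟨d, hd⟩ := IsAlgClosed.exists_pow_nat_eq (s ^ 2 - ζ 0 0 * ζ 1 1) (by norm_num : (0:ℕ) < 2)
        refine ⟨![ζ 0 0, s + d], ![1, (s - d) / ζ 0 0], ?_⟩
        funext i k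
        fin_cases i <;> fin_cases k <;>
          simp only [Fin.zero_eta, Fin.mk_one, Matrix.cons_val_zero, Matrix.cons_val_one, Matrix.head_cons] <;>
          field_simp <;> ring_nf <;>
          first
            | rfl
            | linear_combination (2 : ℂ) * hd
            | linear_combination hd
            | ring
    have key : (∑ i, ∑ j, ∑ k, ∑ l,
        T j i l k * (starRingEnd ℂ) (ζ j l) * ζ i k) =
        ∑ i, ∑ j, ∑ k, ∑ l,
        T j i l k * (starRingEnd ℂ) (V j) * V i * (starRingEnd ℂ) (W l) * W k := by
      rw [← Qn_rank_one, Qn_sym T hsym1 hsym2 (fun i k => V i * W k)]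
      show Qn T ζ = _
      rw [Qn_sym T hsym1 hsym2 ζ, hVW]
    rw [key]; exact hG V W
  · intro hN V W
    have h := hN (fun i k => V i * W k)
    have heq : (∑ i, ∑ j, ∑ k, ∑ l,
        T j i l k * (starRingEnd ℂ) (V j * W l) * (V i * W k)) =
        ∑ i, ∑ j, ∑ k, ∑ l,
        T j i l k * (starRingEnd ℂ) (V j) * V i * (starRingEnd ℂ) (W l) * W k := by
      simp only [Fin.sum_univ_two, map_mul]
      ring
    rw [heq] at h
    exact h
end

section
/- Let $T$ be a Griffiths nonnegative tensor on $\mathbb{C}^n$ (with the Kähler symmetries $T_{\overline{j}i\overline{l}k} = T_{\overline{l}i\overline{j}k} = T_{\overline{j}k\overline{l}i}$), let $\zeta \in \mathbb{C}^{n\times n}$, let $q \geq 3$, and for each $n$-tuple $\sigma$ of $q$-th roots of unity define vectors $V_{(\sigma)}, W_{(\sigma)} \in \mathbb{C}^n$ by $V_{(\sigma)}^i = \sum_{\lambda=1}^n \zeta^{i\lambda}\overline{\sigma_\lambda}$ and $W_{(\sigma)}^k = \sigma_k$. Then $q^{-n}\sum_{\sigma \in U_q^n} \sum_{i,j,k,l}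 T_{\overline{j}i\overline{l}k}\, \overline{V_{(\sigma)}^j} V_{(\sigma)}^i \overline{W_{(\sigma)}^l} W_{(\sigma)}^k = \sum_{i,j}\sum_{k \neq l} T_{\overline{j}i\overline{l}k}\overline{\zeta^{jl}}\zeta^{ik} + \sum_{i,j,k} S_{\overline{j}i} \overline{\zeta^{jk}}\zeta^{ik}$, where $S_{\overline{j}i} = \sum_m T_{\overline{j}i\overline{m}m}$. In particular this quantity is nonnegative. -/
open Complex Finset ComplexOrder

/-- Mathlib no longer provides a `Fintype` instance on `rootsOfUnity`, only `Finite`;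
the sum over a `Fintype` does not depend on the chosen instance. -/
noncomputable instance rootsOfUnityFintypeC (q : ℕ) [NeZero q] : Fintype (rootsOfUnity q ℂ) :=
  Fintype.ofFinite _


lemma conj_ru {q : ℕ} [NeZero q] (x : rootsOfUnity q ℂ) :
    (starRingEnd ℂ) ((x : ℂˣ) : ℂ) = (((x⁻¹ : rootsOfUnity q ℂ) : ℂˣ) : ℂ) := by
  rw [← Complex.inv_eq_conj (Complex.norm_eq_one_of_mem_rootsOfUnity x.2)]
  simp

lemma sum_zpow_ru {q : ℕ} [NeZero q] (e : ℤ) (he : ¬ (q:ℤ) ∣ e) :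
    ∑ x : rootsOfUnity q ℂ, ((((x : ℂˣ) ^ e : ℂˣ)) : ℂ) = 0 := by
  have hν := Complex.isPrimitiveRoot_exp q (NeZero.ne q)
  obtain ⟨y, hy1⟩ : ∃ y : rootsOfUnity q ℂ, ((((y : ℂˣ) ^ e : ℂˣ)) : ℂ) ≠ 1 := by
    refine ⟨hν.toRootsOfUnity, ?_⟩
    have hc : (((hν.toRootsOfUnity : ℂˣ)) : ℂ) = Complex.exp (2 * Real.pi * I / q) := by
      simp [IsPrimitiveRoot.toRootsOfUnity]
    rw [show ((((hν.toRootsOfUnity : ℂˣ) ^ e : ℂˣ)) : ℂ)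
        = ((((hν.toRootsOfUnity : ℂˣ)) : ℂ)) ^ e from by rw [Units.val_zpow_eq_zpow_val]]
    rw [hc]
    exact fun h => he ((hν.zpow_eq_one_iff_dvd e).mp h)
  have hmul : ∀ x : rootsOfUnity q ℂ,
      (((((y * x : rootsOfUnity q ℂ) : ℂˣ) ^ e : ℂˣ)) : ℂ)
      = ((((y : ℂˣ) ^ e : ℂˣ)) : ℂ) * ((((x : ℂˣ) ^ e : ℂˣ)) : ℂ) := fun x => by
    rw [show ((y * x : rootsOfUnity q ℂ) : ℂˣ) = (y : ℂˣ) * (x : ℂˣ) from rfl, mul_zpow,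
      Units.val_mul]
  have key : ∑ x : rootsOfUnity q ℂ, ((((x : ℂˣ) ^ e : ℂˣ)) : ℂ)
      = ((((y : ℂˣ) ^ e : ℂˣ)) : ℂ) * ∑ x : rootsOfUnity q ℂ, ((((x : ℂˣ) ^ e : ℂˣ)) : ℂ) := by
    rw [Finset.mul_sum]
    calc ∑ x : rootsOfUnity q ℂ, ((((x : ℂˣ) ^ e : ℂˣ)) : ℂ)
        = ∑ x : rootsOfUnity q ℂ, (((((y * x : rootsOfUnity q ℂ) : ℂˣ) ^ e : ℂˣ)) : ℂ) :=
          (Fintype.sum_equiv (Equiv.mulLeft y)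
            (fun x : rootsOfUnity q ℂ =>
              (((((y * x : rootsOfUnity q ℂ) : ℂˣ) ^ e : ℂˣ)) : ℂ))
            (fun z : rootsOfUnity q ℂ => ((((z : ℂˣ) ^ e : ℂˣ)) : ℂ))
            (fun x => rfl)).symm
      _ = ∑ x : rootsOfUnity q ℂ,
            ((((y : ℂˣ) ^ e : ℂˣ)) : ℂ) * ((((x : ℂˣ) ^ e : ℂˣ)) : ℂ) :=
          Finset.sum_congr rfl fun x _ => hmul x
  have h0 : (((((y : ℂˣ) ^ e : ℂˣ)) : ℂ) - 1) *
      ∑ x : rootsOfUnity q ℂ, ((((x : ℂˣ) ^ e : ℂˣ)) : ℂ) = 0 := by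
    linear_combination -key
  rcases mul_eq_zero.mp h0 with h | h
  · exact absurd (sub_eq_zero.mp h) hy1
  · exact h

lemma sum_zpow_ru_ite {q : ℕ} [NeZero q] (hq : 3 ≤ q) (e : ℤ) (he : e.natAbs ≤ 2) :
    ∑ x : rootsOfUnity q ℂ, ((((x : ℂˣ) ^ e : ℂˣ)) : ℂ) = if e = 0 then (q:ℂ) else 0 := by
  split_ifs with h
  · subst h
    simp only [zpow_zero, Units.val_one, Finset.sum_const, Finset.card_univ, nsmul_eq_mul, mul_one]
    rw [Fintype.card_eq_nat_card, Complex.card_rootsOfUnity]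
  · refine sum_zpow_ru e fun hd => h ?_
    have h1 : q ∣ e.natAbs := Int.natCast_dvd_natCast.mp (by simpa [Int.dvd_natAbs] using hd)
    rcases Nat.eq_zero_or_pos e.natAbs with h2 | h2
    · exact Int.natAbs_eq_zero.mp h2
    · exact absurd (Nat.le_of_dvd h2 h1) (by omega)

lemma indic_iff {n : ℕ} (a b l k : Fin n)
    (h : ∀ m : Fin n, ((if m = a then (1:ℤ) else 0) + (if m = k then 1 else 0)
      - (if m = b then 1 else 0) - (if m = l then 1 else 0)) = 0) :
    (a = b ∧ k = l) ∨ (a = l ∧ b = k) := by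
  by_cases hab : a = b
  · left
    refine ⟨hab, ?_⟩
    by_contra hkl
    have hk := h k
    have hl := h l
    subst hab
    simp only [if_pos rfl] at hk hl
    by_cases hka : k = a <;> by_cases hkl' : k = l <;> by_cases hla : l = a <;>
      simp_all <;> omega
  · have ha := h a
    simp only [if_pos rfl] at ha
    have hla : a = l ∧ ¬ a = k := by
      by_cases h1 : a = k <;> by_cases h2 : a = l <;> simp_all <;> omega
    right
    refine ⟨hla.1, ?_⟩
    have hb := h b
    simp only [if_pos rfl] at hb
    by_cases h1 : b = a <;> by_cases h2 : b = k <;> by_cases h3 : b = l <;>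
      simp_all <;> omega

lemma sum_sigma_ru {n q : ℕ} [NeZero q] (hq : 3 ≤ q) (a b l k : Fin n) :
    ∑ σ : Fin n → rootsOfUnity q ℂ,
      (((σ a : ℂˣ)) : ℂ) * (starRingEnd ℂ) (((σ b : ℂˣ)) : ℂ) *
        (starRingEnd ℂ) (((σ l : ℂˣ)) : ℂ) * (((σ k : ℂˣ)) : ℂ)
    = if (a = b ∧ k = l) ∨ (a = l ∧ b = k) then ((q:ℂ))^n else 0 := by
  classical
  set e : Fin n → ℤ := fun m => (if m = a then (1:ℤ) else 0) + (if m = k then 1 else 0)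
      - (if m = b then 1 else 0) - (if m = l then 1 else 0) with he
  have step1 : ∀ σ : Fin n → rootsOfUnity q ℂ,
      (((σ a : ℂˣ)) : ℂ) * (starRingEnd ℂ) (((σ b : ℂˣ)) : ℂ) *
        (starRingEnd ℂ) (((σ l : ℂˣ)) : ℂ) * (((σ k : ℂˣ)) : ℂ)
      = ∏ m, ((((σ m : ℂˣ) ^ (e m) : ℂˣ)) : ℂ) := by
    intro σ
    rw [conj_ru, conj_ru]
    have : ∏ m, (((σ m : ℂˣ)) ^ (e m) : ℂˣ)
        = (σ a : ℂˣ) * ((σ b)⁻¹ : rootsOfUnity q ℂ) * ((σ l)⁻¹ : rootsOfUnity q ℂ) * (σ k : ℂˣ) := by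
      have expand : ∀ m, (((σ m : ℂˣ)) ^ (e m) : ℂˣ)
          = (if m = a then (σ m : ℂˣ) else 1) * (if m = k then (σ m : ℂˣ) else 1)
            * (if m = b then ((σ m : ℂˣ))⁻¹ else 1) * (if m = l then ((σ m : ℂˣ))⁻¹ else 1) := by
        intro m
        rw [he]
        split_ifs <;> simp_all <;> group <;> (try rw [pow_two]) <;> (try rw [zpow_two])
      rw [Finset.prod_congr rfl fun m _ => expand m]
      rw [Finset.prod_mul_distrib, Finset.prod_mul_distrib, Finset.prod_mul_distrib]
      rw [Finset.prod_ite_eq' univ a (fun m => (σ m : ℂˣ)),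
        Finset.prod_ite_eq' univ k (fun m => (σ m : ℂˣ)),
        Finset.prod_ite_eq' univ b (fun m => ((σ m : ℂˣ))⁻¹),
        Finset.prod_ite_eq' univ l (fun m => ((σ m : ℂˣ))⁻¹)]
      simp only [Finset.mem_univ, if_pos]
      simp [mul_comm, mul_assoc, mul_left_comm]
    calc ((σ a : ℂˣ) : ℂ) * ((((σ b)⁻¹ : rootsOfUnity q ℂ) : ℂˣ) : ℂ) *
          ((((σ l)⁻¹ : rootsOfUnity q ℂ) : ℂˣ) : ℂ) * ((σ k : ℂˣ) : ℂ)
        = (((σ a : ℂˣ) * ((σ b)⁻¹ : rootsOfUnity q ℂ) * ((σ l)⁻¹ : rootsOfUnity q ℂ)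
            * (σ k : ℂˣ) : ℂˣ) : ℂ) := by push_cast; ring
      _ = ((∏ m, (((σ m : ℂˣ)) ^ (e m) : ℂˣ) : ℂˣ) : ℂ) := by rw [this]
      _ = ∏ m, ((((σ m : ℂˣ) ^ (e m) : ℂˣ)) : ℂ) := by push_cast; rfl
  rw [Finset.sum_congr rfl fun σ _ => step1 σ]
  rw [← Fintype.prod_sum (fun (m : Fin n) (x : rootsOfUnity q ℂ) => ((((x : ℂˣ) ^ (e m) : ℂˣ)) : ℂ))]
  have habs : ∀ m, (e m).natAbs ≤ 2 := by
    intro m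
    simp only [he]
    try dsimp only
    split_ifs <;> decide
  rw [Finset.prod_congr rfl fun m _ => sum_zpow_ru_ite hq (e m) (habs m)]
  by_cases hall : ∀ m, e m = 0
  · rw [Finset.prod_congr rfl fun m _ => if_pos (hall m), Finset.prod_const,
      Finset.card_univ, Fintype.card_fin]
    rw [if_pos (indic_iff a b l k hall)]
  · push_neg at hall
    obtain ⟨m0, hm0⟩ := hall
    rw [Finset.prod_eq_zero (Finset.mem_univ m0) (by rw [if_neg hm0])]
    have : ¬ ((a = b ∧ k = l) ∨ (a = l ∧ b = k)) := by
      intro hc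
      apply hm0
      rw [he]
      rcases hc with ⟨h1, h2⟩ | ⟨h1, h2⟩ <;> subst h1 <;> subst h2 <;>
        simp only [] <;> split_ifs <;> simp_all <;> omega
    rw [if_neg this]

/-- The averaging identity in the proof of Lemma 5: for a Griffiths nonnegative
tensor `T` with the Kähler symmetries, a matrix `ζ`, and `q ≥ 3`, averaging the
Griffiths form of `T` on the vectors `V_(σ)^i = ∑_λ ζ^{iλ} conj σ_λ`,
`W_(σ)^k = σ_k` over all `n`-tuples `σ` of `q`-th roots of unity gives
`∑_{i,j} ∑_{k≠l} T_{j̄il̄k} conj ζ^{jl} ζ^{ik} + ∑_{i,j,k} S_{j̄i} conj ζ^{jk} ζ^{ik}`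
with `S_{j̄i} = ∑_m T_{j̄im̄m}`; in particular this quantity is nonnegative.
Indices of `T j i l k` are in the order `j̄ i l̄ k`. -/
theorem stmt11 (n q : ℕ) [NeZero q] (hq : 3 ≤ q)
    (T : Fin n → Fin n → Fin n → Fin n → ℂ)
    (hsym1 : ∀ i j k l, T j i l k = T l i j k)
    (hsym2 : ∀ i j k l, T j i l k = T j k l i)
    (hGr : ∀ V W : Fin n → ℂ, 0 ≤ ∑ i, ∑ j, ∑ k, ∑ l,
      T j i l k * (starRingEnd ℂ) (V j) * V i * (starRingEnd ℂ) (W l) * W k)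
    (ζ : Fin n → Fin n → ℂ) :
    (((q : ℂ) ^ n)⁻¹ *
        ∑ σ : Fin n → rootsOfUnity q ℂ, ∑ i, ∑ j, ∑ k, ∑ l,
          T j i l k *
            (starRingEnd ℂ) (∑ lam, ζ j lam * (starRingEnd ℂ) ((σ lam : ℂˣ) : ℂ)) *
            (∑ lam, ζ i lam * (starRingEnd ℂ) ((σ lam : ℂˣ) : ℂ)) *
            (starRingEnd ℂ) ((σ l : ℂˣ) : ℂ) * ((σ k : ℂˣ) : ℂ)
      = (∑ i, ∑ j, ∑ k, ∑ l, if k = l then 0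
            else T j i l k * (starRingEnd ℂ) (ζ j l) * ζ i k)
        + ∑ i, ∑ j, ∑ k,
            (∑ m, T j i m m) * (starRingEnd ℂ) (ζ j k) * ζ i k) ∧
    (0 ≤ (∑ i, ∑ j, ∑ k, ∑ l, if k = l then 0
            else T j i l k * (starRingEnd ℂ) (ζ j l) * ζ i k)
        + ∑ i, ∑ j, ∑ k,
            (∑ m, T j i m m) * (starRingEnd ℂ) (ζ j k) * ζ i k) := by
  classical
  have hqn : ((q : ℂ) ^ n) ≠ 0 := pow_ne_zero _ (Nat.cast_ne_zero.mpr (NeZero.ne q))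
  -- the averaged sum
  have key : (∑ σ : Fin n → rootsOfUnity q ℂ, ∑ i, ∑ j, ∑ k, ∑ l,
          T j i l k *
            (starRingEnd ℂ) (∑ lam, ζ j lam * (starRingEnd ℂ) ((σ lam : ℂˣ) : ℂ)) *
            (∑ lam, ζ i lam * (starRingEnd ℂ) ((σ lam : ℂˣ) : ℂ)) *
            (starRingEnd ℂ) ((σ l : ℂˣ) : ℂ) * ((σ k : ℂˣ) : ℂ))
      = (q : ℂ) ^ n * ((∑ i, ∑ j, ∑ k, ∑ l, if k = l then 0
            else T j i l k * (starRingEnd ℂ) (ζ j l) * ζ i k)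
        + ∑ i, ∑ j, ∑ k,
            (∑ m, T j i m m) * (starRingEnd ℂ) (ζ j k) * ζ i k) := by
    have stepA : ∀ σ : Fin n → rootsOfUnity q ℂ, (∑ i, ∑ j, ∑ k, ∑ l,
          T j i l k *
            (starRingEnd ℂ) (∑ lam, ζ j lam * (starRingEnd ℂ) ((σ lam : ℂˣ) : ℂ)) *
            (∑ lam, ζ i lam * (starRingEnd ℂ) ((σ lam : ℂˣ) : ℂ)) *
            (starRingEnd ℂ) ((σ l : ℂˣ) : ℂ) * ((σ k : ℂˣ) : ℂ))
        = ∑ i, ∑ j, ∑ k, ∑ l, ∑ a, ∑ b,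
            T j i l k * (starRingEnd ℂ) (ζ j b) * ζ i a *
              (((σ b : ℂˣ) : ℂ) * (starRingEnd ℂ) ((σ a : ℂˣ) : ℂ) *
                (starRingEnd ℂ) ((σ l : ℂˣ) : ℂ) * ((σ k : ℂˣ) : ℂ)) := by
      intro σ
      simp only [map_sum, map_mul, Complex.conj_conj, Finset.sum_mul, Finset.mul_sum]
      refine Finset.sum_congr rfl fun i _ => Finset.sum_congr rfl fun j _ =>
        Finset.sum_congr rfl fun k _ => Finset.sum_congr rfl fun l _ =>
        Finset.sum_congr rfl fun a _ => Finset.sum_congr rfl fun b _ => by ring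
    calc (∑ σ : Fin n → rootsOfUnity q ℂ, ∑ i, ∑ j, ∑ k, ∑ l,
          T j i l k *
            (starRingEnd ℂ) (∑ lam, ζ j lam * (starRingEnd ℂ) ((σ lam : ℂˣ) : ℂ)) *
            (∑ lam, ζ i lam * (starRingEnd ℂ) ((σ lam : ℂˣ) : ℂ)) *
            (starRingEnd ℂ) ((σ l : ℂˣ) : ℂ) * ((σ k : ℂˣ) : ℂ))
        = ∑ σ : Fin n → rootsOfUnity q ℂ, ∑ i, ∑ j, ∑ k, ∑ l, ∑ a, ∑ b,
            T j i l k * (starRingEnd ℂ) (ζ j b) * ζ i a *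
              (((σ b : ℂˣ) : ℂ) * (starRingEnd ℂ) ((σ a : ℂˣ) : ℂ) *
                (starRingEnd ℂ) ((σ l : ℂˣ) : ℂ) * ((σ k : ℂˣ) : ℂ)) :=
          Finset.sum_congr rfl fun σ _ => stepA σ
      _ = ∑ i, ∑ j, ∑ k, ∑ l, ∑ a, ∑ b,
            T j i l k * (starRingEnd ℂ) (ζ j b) * ζ i a *
              ∑ σ : Fin n → rootsOfUnity q ℂ,
                (((σ b : ℂˣ) : ℂ) * (starRingEnd ℂ) ((σ a : ℂˣ) : ℂ) *
                  (starRingEnd ℂ) ((σ l : ℂˣ) : ℂ) * ((σ k : ℂˣ) : ℂ)) := by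
          rw [Finset.sum_comm]
          refine Finset.sum_congr rfl fun i _ => ?_
          rw [Finset.sum_comm]
          refine Finset.sum_congr rfl fun j _ => ?_
          rw [Finset.sum_comm]
          refine Finset.sum_congr rfl fun k _ => ?_
          rw [Finset.sum_comm]
          refine Finset.sum_congr rfl fun l _ => ?_
          rw [Finset.sum_comm]
          refine Finset.sum_congr rfl fun a _ => ?_
          rw [Finset.sum_comm]
          refine Finset.sum_congr rfl fun b _ => ?_
          exact (Finset.mul_sum _ _ _).symm
      _ = ∑ i, ∑ j, ∑ k, ∑ l, ∑ a, ∑ b,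
            T j i l k * (starRingEnd ℂ) (ζ j b) * ζ i a *
              (if (b = a ∧ k = l) ∨ (b = l ∧ a = k) then ((q:ℂ))^n else 0) := by
          refine Finset.sum_congr rfl fun i _ => Finset.sum_congr rfl fun j _ =>
            Finset.sum_congr rfl fun k _ => Finset.sum_congr rfl fun l _ =>
            Finset.sum_congr rfl fun a _ => Finset.sum_congr rfl fun b _ => ?_
          rw [sum_sigma_ru hq b a l k]
      _ = ∑ i, ∑ j, ∑ k, ∑ l, (q : ℂ) ^ n *
            (if k = l then ∑ a, T j i l k * (starRingEnd ℂ) (ζ j a) * ζ i a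
             else T j i l k * (starRingEnd ℂ) (ζ j l) * ζ i k) := by
          refine Finset.sum_congr rfl fun i _ => Finset.sum_congr rfl fun j _ =>
            Finset.sum_congr rfl fun k _ => Finset.sum_congr rfl fun l _ => ?_
          by_cases hkl : k = l
          · rw [if_pos hkl]
            subst hkl
            have h1 : ∀ a : Fin n, (∑ b, T j i k k * (starRingEnd ℂ) (ζ j b) * ζ i a *
                (if (b = a ∧ k = k) ∨ (b = k ∧ a = k) then ((q:ℂ))^n else 0))
                = T j i k k * (starRingEnd ℂ) (ζ j a) * ζ i a * (q:ℂ)^n := by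
              intro a
              have h2 : ∀ b : Fin n, (T j i k k * (starRingEnd ℂ) (ζ j b) * ζ i a *
                  (if (b = a ∧ k = k) ∨ (b = k ∧ a = k) then ((q:ℂ))^n else 0))
                  = if b = a then T j i k k * (starRingEnd ℂ) (ζ j b) * ζ i a * (q:ℂ)^n
                    else 0 := by
                intro b
                by_cases hba : b = a
                · rw [if_pos (Or.inl ⟨hba, rfl⟩), if_pos hba]
                · rw [if_neg ?_, if_neg hba, mul_zero]
                  rintro (⟨h, -⟩ | ⟨h1, h2⟩)
                  · exact hba h
                  · exact hba (h1.trans h2.symm)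
              rw [Finset.sum_congr rfl fun b _ => h2 b]
              rw [Finset.sum_ite_eq' univ a
                (fun b => T j i k k * (starRingEnd ℂ) (ζ j b) * ζ i a * (q:ℂ)^n),
                if_pos (Finset.mem_univ a)]
            rw [Finset.sum_congr rfl fun a _ => h1 a, Finset.mul_sum]
            exact Finset.sum_congr rfl fun a _ => by ring
          · rw [if_neg hkl]
            have h1 : ∀ a : Fin n, (∑ b, T j i l k * (starRingEnd ℂ) (ζ j b) * ζ i a *
                (if (b = a ∧ k = l) ∨ (b = l ∧ a = k) then ((q:ℂ))^n else 0))
                = if a = k then T j i l k * (starRingEnd ℂ) (ζ j l) * ζ i a * (q:ℂ)^n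
                  else 0 := by
              intro a
              have h2 : ∀ b : Fin n, (T j i l k * (starRingEnd ℂ) (ζ j b) * ζ i a *
                  (if (b = a ∧ k = l) ∨ (b = l ∧ a = k) then ((q:ℂ))^n else 0))
                  = if b = l then (if a = k then
                      T j i l k * (starRingEnd ℂ) (ζ j b) * ζ i a * (q:ℂ)^n else 0)
                    else 0 := by
                intro b
                by_cases hbl : b = l <;> by_cases hak : a = k
                · rw [if_pos hbl, if_pos hak, if_pos (Or.inr ⟨hbl, hak⟩)]
                · rw [if_pos hbl, if_neg hak, if_neg ?_, mul_zero]
                  rintro (⟨-, h⟩ | ⟨-, h⟩)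
                  · exact hkl h
                  · exact hak h
                · rw [if_neg hbl, if_neg ?_, mul_zero]
                  rintro (⟨h1, h2⟩ | ⟨h, -⟩)
                  · exact hkl h2
                  · exact hbl h
                · rw [if_neg hbl, if_neg ?_, mul_zero]
                  rintro (⟨h1, h2⟩ | ⟨h, -⟩)
                  · exact hkl h2
                  · exact hbl h
              rw [Finset.sum_congr rfl fun b _ => h2 b]
              rw [Finset.sum_ite_eq' univ l
                (fun b => if a = k then
                  T j i l k * (starRingEnd ℂ) (ζ j b) * ζ i a * (q:ℂ)^n else 0),
                if_pos (Finset.mem_univ l)]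
            rw [Finset.sum_congr rfl fun a _ => h1 a]
            rw [Finset.sum_ite_eq' univ k
              (fun a => T j i l k * (starRingEnd ℂ) (ζ j l) * ζ i a * (q:ℂ)^n),
              if_pos (Finset.mem_univ k)]
            ring
      _ = (q : ℂ) ^ n * ((∑ i, ∑ j, ∑ k, ∑ l, if k = l then 0
              else T j i l k * (starRingEnd ℂ) (ζ j l) * ζ i k)
            + ∑ i, ∑ j, ∑ k,
                (∑ m, T j i m m) * (starRingEnd ℂ) (ζ j k) * ζ i k) := by
          simp only [← Finset.mul_sum]
          congr 1
          have split : ∀ (i j k l : Fin n),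
              (if k = l then ∑ a, T j i l k * (starRingEnd ℂ) (ζ j a) * ζ i a
               else T j i l k * (starRingEnd ℂ) (ζ j l) * ζ i k)
              = (if k = l then 0 else T j i l k * (starRingEnd ℂ) (ζ j l) * ζ i k)
                + (if k = l then ∑ a, T j i l k * (starRingEnd ℂ) (ζ j a) * ζ i a else 0) := by
            intro i j k l
            by_cases hkl : k = l
            · rw [if_pos hkl, if_pos hkl, if_pos hkl, zero_add]
            · rw [if_neg hkl, if_neg hkl, if_neg hkl, add_zero]
          rw [Finset.sum_congr rfl fun i _ => Finset.sum_congr rfl fun j _ =>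
            Finset.sum_congr rfl fun k _ => Finset.sum_congr rfl fun l _ => split i j k l]
          simp only [Finset.sum_add_distrib]
          congr 1
          refine Finset.sum_congr rfl fun i _ => Finset.sum_congr rfl fun j _ => ?_
          have h3 : ∀ k : Fin n,
              (∑ l, if k = l then ∑ a, T j i l k * (starRingEnd ℂ) (ζ j a) * ζ i a else 0)
              = ∑ a, T j i k k * (starRingEnd ℂ) (ζ j a) * ζ i a := by
            intro k
            rw [Finset.sum_ite_eq univ k
              (fun l => ∑ a, T j i l k * (starRingEnd ℂ) (ζ j a) * ζ i a),
              if_pos (Finset.mem_univ k)]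
          rw [Finset.sum_congr rfl fun k _ => h3 k, Finset.sum_comm]
          refine Finset.sum_congr rfl fun k _ => ?_
          rw [Finset.sum_mul, Finset.sum_mul]
  constructor
  · rw [key, ← mul_assoc, inv_mul_cancel₀ hqn, one_mul]
  · have h2 : (0:ℂ) ≤ ∑ σ : Fin n → rootsOfUnity q ℂ, ∑ i, ∑ j, ∑ k, ∑ l,
          T j i l k *
            (starRingEnd ℂ) (∑ lam, ζ j lam * (starRingEnd ℂ) ((σ lam : ℂˣ) : ℂ)) *
            (∑ lam, ζ i lam * (starRingEnd ℂ) ((σ lam : ℂˣ) : ℂ)) *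
            (starRingEnd ℂ) ((σ l : ℂˣ) : ℂ) * ((σ k : ℂˣ) : ℂ) :=
      Finset.sum_nonneg fun σ _ =>
        hGr (fun i => ∑ lam, ζ i lam * (starRingEnd ℂ) ((σ lam : ℂˣ) : ℂ))
          (fun k => ((σ k : ℂˣ) : ℂ))
    have h1 : (0:ℂ) ≤ ((q : ℂ) ^ n)⁻¹ := by
      have : ((q : ℂ) ^ n)⁻¹ = ((((q:ℝ) ^ n)⁻¹ : ℝ) : ℂ) := by push_cast; ring
      rw [this]
      rw [Complex.zero_le_real]
      positivity
    calc (0:ℂ) ≤ ((q : ℂ) ^ n)⁻¹ * ∑ σ : Fin n → rootsOfUnity q ℂ, ∑ i, ∑ j, ∑ k, ∑ l,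
          T j i l k *
            (starRingEnd ℂ) (∑ lam, ζ j lam * (starRingEnd ℂ) ((σ lam : ℂˣ) : ℂ)) *
            (∑ lam, ζ i lam * (starRingEnd ℂ) ((σ lam : ℂˣ) : ℂ)) *
            (starRingEnd ℂ) ((σ l : ℂˣ) : ℂ) * ((σ k : ℂˣ) : ℂ) := mul_nonneg h1 h2
      _ = _ := by rw [key, ← mul_assoc, inv_mul_cancel₀ hqn, one_mul]
end
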